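/- Let $(R,\mathfrak{m})$ be a Noetherian local ring of prime characteristic $p$ possessing a $q_0$-weak test element $c$, and let $L \subseteq M \subseteq N$ be finitely generated $R$-modules. If $M \subseteq (L + \mathfrak{m}M)^*_N$, then $M \subseteq (L + \mathfrak{m}^r M)^*_N$ for every $r \geq 1$, and consequently $M \subseteq L^*_N$. -/

import Mathlib

open TensorProduct

universe u

/-- Type synonym: `R` viewed as an `R`-algebra via the `e`-th iterated Frobenius
`r ↦ r^{pᵉ}`; this is Frobenius pushforward `{}^e R`. -/
def FrobAlg (R : Type u) (_p _e : ℕ) : Type u := R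

section FrobDefs

variable (R : Type u) [CommRing R] (p : ℕ) [Fact p.Prime] [CharP R p] (e : ℕ)

instance : CommRing (FrobAlg R p e) := inferInstanceAs (CommRing R)
instance : CharP (FrobAlg R p e) p := inferInstanceAs (CharP R p)

/-- The structure map `R →+* FrobAlg R p e`, i.e. the `e`-th iterated Frobenius. -/
def frobAlgMap : R →+* FrobAlg R p e := iterateFrobenius R p e

noncomputable instance : Algebra R (FrobAlg R p e) := (frobAlgMap R p e).toAlgebra

/-- An element of `R`, viewed in `FrobAlg R p e` (as the same element). -/
def toFrobAlg (r : R) : FrobAlg R p e := r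

/-- The Frobenius functor: `Fᵉ(M) = {}^e R ⊗_R M`, a module over `FrobAlg R p e`
(whose underlying ring is `R`). -/
def FrobM (M : Type u) [AddCommGroup M] [Module R M] : Type u :=
  TensorProduct R (FrobAlg R p e) M

variable (M : Type u) [AddCommGroup M] [Module R M]

noncomputable instance : AddCommGroup (FrobM R p e M) :=
  inferInstanceAs (AddCommGroup (TensorProduct R (FrobAlg R p e) M))

noncomputable instance : Module (FrobAlg R p e) (FrobM R p e M) :=
  inferInstanceAs (Module (FrobAlg R p e) (TensorProduct R (FrobAlg R p e) M))

variable {M}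

/-- `z^q_M`: the image `1 ⊗ z` of `z` under `M → Fᵉ(M)`. -/
noncomputable def frobPow (z : M) : FrobM R p e M := (1 : FrobAlg R p e) ⊗ₜ[R] z

/-- `L^{[q]}_M`: the image of `Fᵉ(L) → Fᵉ(M)` for a submodule `L ⊆ M`. -/
noncomputable def frobBracket (L : Submodule R M) : Submodule (FrobAlg R p e) (FrobM R p e M) :=
  LinearMap.range (LinearMap.baseChange (FrobAlg R p e) L.subtype)

end FrobDefs

section TC

variable {R : Type u} [CommRing R] (p : ℕ) [Fact p.Prime] [CharP R p]

/-- `R°`: the set of elements not in any minimal prime of `R`. -/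
def ringCirc (R : Type u) [CommRing R] : Set R :=
  {c | ∀ P ∈ minimalPrimes R, c ∉ P}

variable {M : Type u} [AddCommGroup M] [Module R M]

/-- The tight closure `L^*_M` of a submodule `L ⊆ M`. -/
def tightClosure (L : Submodule R M) : Set M :=
  {z | ∃ c ∈ ringCirc R, ∃ e₀ : ℕ, ∀ e : ℕ, e₀ ≤ e →
    toFrobAlg R p e c • frobPow R p e z ∈ frobBracket R p e L}

/-- `c` is a `q₀`-weak test element (`q₀ = p^{e₀}`): `c ∈ R°` and membership in tight
closure is detected by `c` from `q₀` onwards, for all submodules of all modules. -/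
def IsWeakTestElement (c : R) (e₀ : ℕ) : Prop :=
  c ∈ ringCirc R ∧
    ∀ (N : Type u) [AddCommGroup N] [Module R N] (L : Submodule R N) (z : N),
      z ∈ tightClosure p L ↔
        ∀ e : ℕ, e₀ ≤ e → toFrobAlg R p e c • frobPow R p e z ∈ frobBracket R p e L

end TC

section Aux

set_option linter.unusedSectionVars false
variable {R : Type u} [CommRing R] (p : ℕ) [Fact p.Prime] [CharP R p] (e : ℕ)
variable {N : Type u} [AddCommGroup N] [Module R N]

lemma frobPow_add (x y : N) :
    frobPow R p e (x + y) = frobPow R p e x + frobPow R p e y :=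
  TensorProduct.tmul_add _ _ _

lemma frobPow_smul (a : R) (n : N) :
    frobPow R p e (a • n) = toFrobAlg R p e (a ^ p ^ e) • frobPow R p e n := by
  show (1 : FrobAlg R p e) ⊗ₜ[R] (a • n)
      = toFrobAlg R p e (a ^ p ^ e) • ((1 : FrobAlg R p e) ⊗ₜ[R] n)
  rw [← TensorProduct.smul_tmul, TensorProduct.smul_tmul', Algebra.smul_def, mul_one]
  congr 1
  rw [smul_eq_mul, mul_one]
  exact iterateFrobenius_def p e a

def frobIdeal (I : Ideal R) : Ideal (FrobAlg R p e) := I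

lemma mem_frobIdeal {I : Ideal R} {a : R} (ha : a ∈ I) :
    toFrobAlg R p e a ∈ frobIdeal p e I := ha

end Aux

section Aux2
set_option linter.unusedSectionVars false
variable {R : Type u} [CommRing R] (p : ℕ) [Fact p.Prime] [CharP R p] (e : ℕ)
variable {N : Type u} [AddCommGroup N] [Module R N]

lemma frobBracket_eq_span (L : Submodule R N) :
    frobBracket R p e L
      = Submodule.span (FrobAlg R p e) (frobPow R p e '' (L : Set N)) := by
  apply le_antisymm
  · rintro x ⟨t, rfl⟩
    show (LinearMap.baseChange (FrobAlg R p e) L.subtype) t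
        ∈ Submodule.span (FrobAlg R p e) (frobPow R p e '' (L : Set N))
    induction t using TensorProduct.induction_on with
    | zero => rw [map_zero]; exact Submodule.zero_mem _
    | tmul s l =>
        rw [LinearMap.baseChange_tmul]
        have hs : (s ⊗ₜ[R] (L.subtype l) : FrobM R p e N)
            = s • frobPow R p e (L.subtype l) := by
          unfold frobPow
          exact (congrArg (· ⊗ₜ[R] (L.subtype l)) (mul_one s).symm).trans
            (TensorProduct.smul_tmul' s (1 : FrobAlg R p e) (L.subtype l)).symm
        rw [hs]
        exact Submodule.smul_mem (Submodule.span (FrobAlg R p e) (frobPow R p e '' (L : Set N))) s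
          (Submodule.subset_span ⟨(l : N), l.2, rfl⟩)
    | add t1 t2 h1 h2 => rw [map_add]; exact Submodule.add_mem _ h1 h2
  · rw [Submodule.span_le]
    rintro x ⟨l, hl, rfl⟩
    refine ⟨(1 : FrobAlg R p e) ⊗ₜ[R] (⟨l, hl⟩ : L), ?_⟩
    show (LinearMap.baseChange (FrobAlg R p e) L.subtype)
        ((1 : FrobAlg R p e) ⊗ₜ[R] (⟨l, hl⟩ : L)) = frobPow R p e l
    rw [LinearMap.baseChange_tmul]
    rfl

lemma frobBracket_mono {A B : Submodule R N} (hAB : A ≤ B) :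
    frobBracket R p e A ≤ frobBracket R p e B := by
  rw [frobBracket_eq_span, frobBracket_eq_span]
  exact Submodule.span_mono (Set.image_mono hAB)

lemma frobPow_mem_frobBracket {K : Submodule R N} {x : N} (hx : x ∈ K) :
    frobPow R p e x ∈ frobBracket R p e K := by
  rw [frobBracket_eq_span]
  exact Submodule.subset_span ⟨x, hx, rfl⟩

lemma frobBracket_sup (A B : Submodule R N) :
    frobBracket R p e (A ⊔ B) = frobBracket R p e A ⊔ frobBracket R p e B := by
  apply le_antisymm
  · rw [frobBracket_eq_span, Submodule.span_le]
    rintro x ⟨l, hl, rfl⟩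
    obtain ⟨a, ha, b, hb, rfl⟩ := Submodule.mem_sup.mp hl
    rw [frobPow_add]
    exact Submodule.add_mem _
      (Submodule.mem_sup_left (frobPow_mem_frobBracket p e ha))
      (Submodule.mem_sup_right (frobPow_mem_frobBracket p e hb))
  · exact sup_le (frobBracket_mono p e le_sup_left)
      (frobBracket_mono p e le_sup_right)

/-- Lemma A: multiplication by `a^{pᵉ}` moves `K^{[q]}` into `K'^{[q]}` if `a • K ⊆ K'`. -/
lemma smul_frobBracket_le {K K' : Submodule R N} (a : R)
    (hK : ∀ x ∈ K, a • x ∈ K') {v : FrobM R p e N}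
    (hv : v ∈ frobBracket R p e K) :
    toFrobAlg R p e (a ^ p ^ e) • v ∈ frobBracket R p e K' := by
  rw [frobBracket_eq_span] at hv
  induction hv using Submodule.span_induction with
  | mem x hx =>
      obtain ⟨k, hk, rfl⟩ := hx
      rw [← frobPow_smul]
      exact frobPow_mem_frobBracket p e (hK k hk)
  | zero => rw [smul_zero]; exact Submodule.zero_mem _
  | add x y _ _ hx hy => rw [smul_add]; exact Submodule.add_mem _ hx hy
  | smul s x _ hx => rw [smul_comm]; exact Submodule.smul_mem _ s hx

lemma frobIdeal_mul_le (I J : Ideal R) :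
    frobIdeal p e (I * J) ≤ frobIdeal p e I * frobIdeal p e J := by
  intro x hx
  have hx' : x ∈ I * J := hx
  refine Submodule.mul_induction_on
    (C := fun y => toFrobAlg R p e y ∈ frobIdeal p e I * frobIdeal p e J) hx'
    (fun m hm n hn => ?_) (fun x y hx hy => ?_)
  · exact Ideal.mul_mem_mul (mem_frobIdeal p e hm) (mem_frobIdeal p e hn)
  · exact Ideal.add_mem _ hx hy

lemma frobIdeal_pow_le (I : Ideal R) (r : ℕ) :
    frobIdeal p e (I ^ r) ≤ frobIdeal p e I ^ r := by
  induction r with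
  | zero => intro x _; rw [pow_zero, Ideal.one_eq_top]; exact Submodule.mem_top
  | succ r ih =>
      rw [pow_succ, pow_succ]
      exact le_trans (frobIdeal_mul_le p e _ _) (Ideal.mul_mono ih le_rfl)

/-- Lemma C: `(I • K)^{[q]} ⊆ I' • K^{[q]}`. -/
lemma frobBracket_smul_le (I : Ideal R) (K : Submodule R N) :
    frobBracket R p e (I • K) ≤ frobIdeal p e I • frobBracket R p e K := by
  rw [frobBracket_eq_span, Submodule.span_le]
  rintro x ⟨t, ht, rfl⟩
  refine Submodule.smul_induction_on (p := fun t =>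
      frobPow R p e t ∈ frobIdeal p e I • frobBracket R p e K) ht
    (fun a ha k hk => ?_) (fun t1 t2 h1 h2 => ?_)
  · show frobPow R p e (a • k) ∈ _
    rw [frobPow_smul]
    have hq : a ^ p ^ e ∈ I :=
      I.pow_mem_of_mem ha _ (pow_pos (Fact.out : p.Prime).pos e)
    exact Submodule.smul_mem_smul (mem_frobIdeal p e hq)
      (frobPow_mem_frobBracket p e hk)
  · show frobPow R p e (t1 + t2) ∈ _
    rw [frobPow_add]; exact Submodule.add_mem _ h1 h2

lemma mul_mem_ringCirc {c d : R} (hc : c ∈ ringCirc R) (hd : d ∈ ringCirc R) :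
    c * d ∈ ringCirc R := by
  intro P hP hmem
  have hprime : P.IsPrime := hP.1.1
  rcases hprime.mem_or_mem hmem with h' | h'
  · exact hc P hP h'
  · exact hd P hP h'

end Aux2

section Inst
variable {R : Type u} [CommRing R] (p : ℕ) [Fact p.Prime] [CharP R p] (e : ℕ)

instance [IsNoetherianRing R] : IsNoetherianRing (FrobAlg R p e) :=
  inferInstanceAs (IsNoetherianRing R)

instance [IsLocalRing R] : IsLocalRing (FrobAlg R p e) :=
  inferInstanceAs (IsLocalRing R)

noncomputable instance (N : Type u) [AddCommGroup N] [Module R N] [Module.Finite R N] :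
    Module.Finite (FrobAlg R p e) (FrobM R p e N) :=
  inferInstanceAs (Module.Finite (FrobAlg R p e) (TensorProduct R (FrobAlg R p e) N))

set_option linter.unusedSectionVars false in
lemma frobIdeal_maximalIdeal_ne_top [IsLocalRing R] :
    frobIdeal p e (IsLocalRing.maximalIdeal R) ≠ ⊤ := by
  intro ht
  have h1 : (1 : FrobAlg R p e) ∈ frobIdeal p e (IsLocalRing.maximalIdeal R) := by
    rw [ht]; exact Submodule.mem_top
  have h1' : (1 : R) ∈ IsLocalRing.maximalIdeal R := h1
  exact (IsLocalRing.maximalIdeal.isMaximal R).ne_top ((Ideal.eq_top_iff_one _).mpr h1')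

end Inst


/-- Nakayama lemma for tight closure: Let `(R,𝔪)` be Noetherian local
of characteristic `p` with a `q₀`-weak test element `c`, and `L ⊆ M ⊆ N` finitely
generated modules.  If `M ⊆ (L + 𝔪M)^*_N` then `M ⊆ (L + 𝔪ʳM)^*_N` for every `r ≥ 1`,
and consequently `M ⊆ L^*_N`. -/
theorem stmt13 {R : Type u} [CommRing R] [IsNoetherianRing R] [IsLocalRing R]
    (p : ℕ) [Fact p.Prime] [CharP R p]
    (c : R) (e₀ : ℕ) (hc : IsWeakTestElement p c e₀)
    (N : Type u) [AddCommGroup N] [Module R N] [Module.Finite R N]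
    (L M : Submodule R N) (hLM : L ≤ M)
    (h : (M : Set N) ⊆ tightClosure p (L ⊔ (IsLocalRing.maximalIdeal R) • M)) :
    (∀ r : ℕ, 1 ≤ r →
      (M : Set N) ⊆ tightClosure p (L ⊔ (IsLocalRing.maximalIdeal R) ^ r • M)) ∧
    (M : Set N) ⊆ tightClosure p L := by
  set 𝔪 := IsLocalRing.maximalIdeal R with h𝔪
  have hsq : c * c ∈ ringCirc R := mul_mem_ringCirc hc.1 hc.1
  have part1 : ∀ r : ℕ, 1 ≤ r →
      (M : Set N) ⊆ tightClosure p (L ⊔ 𝔪 ^ r • M) := by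
    intro r hr
    induction r, hr using Nat.le_induction with
    | base => rw [pow_one]; exact h
    | succ r hr ih =>
        intro z hz
        refine ⟨c * c, hsq, e₀, fun e he => ?_⟩
        have hz1 : toFrobAlg R p e c • frobPow R p e z
            ∈ frobBracket R p e L ⊔ frobBracket R p e (𝔪 ^ r • M) := by
          rw [← frobBracket_sup]
          exact ((hc.2 N (L ⊔ 𝔪 ^ r • M) z).mp (ih hz)) e he
        obtain ⟨u, hu, v, hv, huv⟩ := Submodule.mem_sup.mp hz1
        have hsplit : toFrobAlg R p e (c * c) • frobPow R p e z
            = toFrobAlg R p e c • u + toFrobAlg R p e c • v := by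
          have h2 : toFrobAlg R p e (c * c) • frobPow R p e z
              = toFrobAlg R p e c • (toFrobAlg R p e c • frobPow R p e z) :=
            mul_smul _ _ _
          rw [h2, ← huv, smul_add]
        rw [hsplit]
        refine Submodule.add_mem _
          (frobBracket_mono p e le_sup_left (Submodule.smul_mem _ _ hu)) ?_
        clear hsplit hz1 huv hu u
        rw [frobBracket_eq_span] at hv
        induction hv using Submodule.span_induction with
        | mem x hx =>
            obtain ⟨t, ht, rfl⟩ := hx
            refine Submodule.smul_induction_on (p := fun t =>
                toFrobAlg R p e c • frobPow R p e t
                  ∈ frobBracket R p e (L ⊔ 𝔪 ^ (r + 1) • M)) ht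
              (fun a ha m hm => ?_) (fun t1 t2 h1 h2 => ?_)
            · show toFrobAlg R p e c • frobPow R p e (a • m)
                ∈ frobBracket R p e (L ⊔ 𝔪 ^ (r + 1) • M)
              have hcm : toFrobAlg R p e c • frobPow R p e m
                  ∈ frobBracket R p e (L ⊔ 𝔪 • M) :=
                ((hc.2 N (L ⊔ 𝔪 • M) m).mp (h hm)) e he
              have hK : ∀ x ∈ (L ⊔ 𝔪 • M : Submodule R N),
                  a • x ∈ (L ⊔ 𝔪 ^ (r + 1) • M : Submodule R N) := by
                intro x hx
                obtain ⟨l, hl, s, hs, rfl⟩ := Submodule.mem_sup.mp hx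
                rw [smul_add]
                refine Submodule.add_mem _
                  (Submodule.mem_sup_left (L.smul_mem a hl))
                  (Submodule.mem_sup_right ?_)
                rw [pow_succ, mul_smul]
                exact Submodule.smul_mem_smul ha hs
              rw [frobPow_smul, smul_comm]
              exact smul_frobBracket_le p e a hK hcm
            · show toFrobAlg R p e c • frobPow R p e (t1 + t2)
                ∈ frobBracket R p e (L ⊔ 𝔪 ^ (r + 1) • M)
              rw [frobPow_add, smul_add]
              exact Submodule.add_mem _ h1 h2
        | zero => rw [smul_zero]; exact Submodule.zero_mem _
        | add x y _ _ hx hy => rw [smul_add]; exact Submodule.add_mem _ hx hy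
        | smul s x _ hx => rw [smul_comm]; exact Submodule.smul_mem _ s hx
  refine ⟨part1, ?_⟩
  intro z hz
  refine ⟨c, hc.1, e₀, fun e he => ?_⟩
  set A := frobBracket R p e L with hA
  set J := frobIdeal p e 𝔪 with hJ
  have hmem : ∀ r : ℕ, A.mkQ (toFrobAlg R p e c • frobPow R p e z)
      ∈ (J ^ r • ⊤ : Submodule (FrobAlg R p e) ((FrobM R p e N) ⧸ A)) := by
    intro r
    match r with
    | 0 => rw [pow_zero, one_smul]; exact Submodule.mem_top
    | Nat.succ r =>
      have h1 : toFrobAlg R p e c • frobPow R p e z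
          ∈ A ⊔ frobBracket R p e (𝔪 ^ (r + 1) • M) := by
        rw [hA, ← frobBracket_sup]
        exact ((hc.2 N (L ⊔ 𝔪 ^ (r + 1) • M) z).mp
          (part1 (r + 1) (Nat.succ_le_succ (Nat.zero_le r)) hz)) e he
      obtain ⟨u, hu, w, hw, huw⟩ := Submodule.mem_sup.mp h1
      have hw' : w ∈ (J ^ (r + 1) • ⊤ :
          Submodule (FrobAlg R p e) (FrobM R p e N)) :=
        Submodule.smul_mono (frobIdeal_pow_le p e 𝔪 (r + 1)) le_top
          (frobBracket_smul_le p e (𝔪 ^ (r + 1)) M hw)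
      have h2 : A.mkQ w ∈ (J ^ (r + 1) • ⊤ :
          Submodule (FrobAlg R p e) ((FrobM R p e N) ⧸ A)) := by
        have h3 : A.mkQ w ∈ (J ^ (r + 1) • ⊤ :
            Submodule (FrobAlg R p e) (FrobM R p e N)).map A.mkQ :=
          Submodule.mem_map_of_mem hw'
        rw [Submodule.map_smul''] at h3
        exact Submodule.smul_mono le_rfl le_top h3
      have h4 : A.mkQ (toFrobAlg R p e c • frobPow R p e z) = A.mkQ w := by
        rw [← huw, map_add]
        have : A.mkQ u = 0 := by
          rw [Submodule.mkQ_apply, Submodule.Quotient.mk_eq_zero]; exact hu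
        rw [this, zero_add]
      rw [h4]; exact h2
  have hbot : (⨅ r : ℕ, (J ^ r • ⊤ :
      Submodule (FrobAlg R p e) ((FrobM R p e N) ⧸ A))) = ⊥ :=
    Ideal.iInf_pow_smul_eq_bot_of_isLocalRing (I := J)
      (M := (FrobM R p e N) ⧸ A) (frobIdeal_maximalIdeal_ne_top p e)
  have hz0 : A.mkQ (toFrobAlg R p e c • frobPow R p e z) = 0 := by
    have hm := (Submodule.mem_iInf _).mpr hmem
    rw [hbot] at hm
    exact (Submodule.mem_bot _).mp hm
  rwa [Submodule.mkQ_apply, Submodule.Quotient.mk_eq_zero] at hz0
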